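/- Let T be a double star of order n = a + b + 2 with centers u,v where u has a ≥ 2 leaves and v has b leaves, 1 ≤ b ≤ a. Then the number of odd sets of T equals (n(n−1) − 2 − a(a−1) − b(b−1))/2, and this quantity is at least n(n−a)/2. -/

import Mathlib

open SimpleGraph Finset
open scoped Classical

variable {V : Type*}

/-- The Seidel matrix of a graph: zero diagonal, `-1` for adjacent pairs, `+1` otherwise. -/
noncomputable def seidelMatrix (G : SimpleGraph V) : Matrix V V ℝ :=
  fun i j => if i = j then 0 else if G.Adj i j then -1 else 1

theorem seidelMatrix_isHermitian (G : SimpleGraph V) : (seidelMatrix G).IsHermitian := by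
  unfold Matrix.IsHermitian
  ext i j
  by_cases h : i = j
  · subst h; simp [seidelMatrix]
  · simp [seidelMatrix, Matrix.conjTranspose_apply, h, Ne.symm h, G.adj_comm j i]

/-- The Seidel energy: sum of absolute values of the eigenvalues of the Seidel matrix. -/
noncomputable def seidelEnergy [Fintype V] (G : SimpleGraph V) : ℝ :=
  ∑ i, |(seidelMatrix_isHermitian G).eigenvalues i|

/-- Number of edges with one endpoint in `X` and the other in `Y` (for disjoint `X Y`). -/
noncomputable def edgeCount (G : SimpleGraph V) (X Y : Finset V) : ℕ :=
  ∑ x ∈ X, ∑ y ∈ Y, if G.Adj x y then 1 else 0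

/-- `(X, Y)` is an odd pair: disjoint 2-element sets with an odd number of edges between them. -/
def IsOddPair (G : SimpleGraph V) (X Y : Finset V) : Prop :=
  X.card = 2 ∧ Y.card = 2 ∧ Disjoint X Y ∧ Odd (edgeCount G X Y)

/-- `X` is an odd set: a 2-element set which is the first component of some odd pair. -/
def IsOddSet (G : SimpleGraph V) (X : Finset V) : Prop :=
  X.card = 2 ∧ ∃ Y : Finset V, Y.card = 2 ∧ Disjoint X Y ∧ Odd (edgeCount G X Y)

/-- The graph `Λ(G)` whose edges are the odd sets of `G`. -/
def lambdaGraph (G : SimpleGraph V) : SimpleGraph V where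
  Adj u v := u ≠ v ∧ IsOddSet G {u, v}
  symm := by
    refine ⟨?_⟩
    rintro u v ⟨h1, h2⟩
    exact ⟨h1.symm, by rwa [Finset.pair_comm]⟩
  loopless := by refine ⟨?_⟩; rintro u ⟨h1, -⟩; exact h1 rfl

/-- Seidel switching of `G` with respect to the partition `(S, Sᶜ)`. -/
def seidelSwitch (G : SimpleGraph V) (S : Set V) : SimpleGraph V where
  Adj u v := u ≠ v ∧ (G.Adj u v ↔ ((u ∈ S) ↔ (v ∈ S)))
  symm := by
    refine ⟨?_⟩
    rintro u v ⟨h1, h2⟩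
    refine ⟨h1.symm, ?_⟩
    rw [G.adj_comm]
    tauto
  loopless := by refine ⟨?_⟩; rintro u ⟨h1, -⟩; exact h1 rfl

/-- The degree of a vertex. -/
noncomputable def degree' (G : SimpleGraph V) (v : V) : ℕ := Nat.card {x : V // G.Adj v x}

/-- `D(G)`: the maximum number of leaves adjacent to a single vertex. -/
noncomputable def maxLeafCount [Fintype V] (G : SimpleGraph V) : ℕ :=
  Finset.univ.sup fun w => Nat.card {u : V // G.Adj w u ∧ degree' G u = 1}

/-- The number of odd pairs of `G`. -/
noncomputable def numOddPairs [Fintype V] (G : SimpleGraph V) : ℕ :=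
  Nat.card {p : Finset V × Finset V // IsOddPair G p.1 p.2}

/-- The number of odd sets of `G`. -/
noncomputable def numOddSets [Fintype V] (G : SimpleGraph V) : ℕ :=
  Nat.card {X : Finset V // IsOddSet G X}

/-- `G` is a star: some center vertex lies on every edge. -/
def IsStar (G : SimpleGraph V) : Prop := ∃ c : V, ∀ u v : V, G.Adj u v → u = c ∨ v = c

/-- in a double star with centers `u, v` carrying `a ≥ 2` and `1 ≤ b ≤ a`
leaves respectively, the number of odd sets equals `(n(n-1) - 2 - a(a-1) - b(b-1))/2`, which
is at least `n(n-a)/2`. -/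
theorem numOddSets_doubleStar [Fintype V] (T : SimpleGraph V) (hT : T.IsTree) (u v : V)
    (a b : ℕ) (huv : T.Adj u v)
    (hleaves : ∀ x, x ≠ u → x ≠ v → degree' T x = 1 ∧ (T.Adj x u ∨ T.Adj x v))
    (ha : a = Nat.card {x : V // T.Adj u x ∧ x ≠ v})
    (hb : b = Nat.card {x : V // T.Adj v x ∧ x ≠ u})
    (ha2 : 2 ≤ a) (hb1 : 1 ≤ b) (hba : b ≤ a) (hn : Fintype.card V = a + b + 2) :
    (2 * numOddSets T : ℝ) =
      (Fintype.card V : ℝ) * ((Fintype.card V : ℝ) - 1) - 2 -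
        (a : ℝ) * ((a : ℝ) - 1) - (b : ℝ) * ((b : ℝ) - 1) ∧
    (Fintype.card V : ℝ) * ((Fintype.card V : ℝ) - (a : ℝ)) / 2 ≤ numOddSets T := by
  classical
  have huniq : ∀ x p q : V, degree' T x = 1 → T.Adj x p → T.Adj x q → p = q := by
    intro x p q hd hp hq
    rw [degree', Nat.card_eq_one_iff_unique] at hd
    exact congrArg Subtype.val (hd.1.allEq ⟨p, hp⟩ ⟨q, hq⟩)
  set Lu : Finset V := univ.filter (fun x => T.Adj u x ∧ x ≠ v) with hLudef
  set Lv : Finset V := univ.filter (fun x => T.Adj v x ∧ x ≠ u) with hLvdef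
  have hmLu : ∀ x, x ∈ Lu ↔ T.Adj u x ∧ x ≠ v := by intro x; simp [hLudef]
  have hmLv : ∀ x, x ∈ Lv ↔ T.Adj v x ∧ x ≠ u := by intro x; simp [hLvdef]
  have hune : u ≠ v := T.ne_of_adj huv
  have huLu : u ∉ Lu := fun h => T.irrefl ((hmLu u).1 h).1
  have hvLu : v ∉ Lu := fun h => ((hmLu v).1 h).2 rfl
  have hvLv : v ∉ Lv := fun h => T.irrefl ((hmLv v).1 h).1
  have huLv : u ∉ Lv := fun h => ((hmLv u).1 h).2 rfl
  have hAu : ∀ x ∈ Lu, ∀ w, T.Adj x w ↔ w = u := by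
    intro x hx w
    obtain ⟨hadj, hxv⟩ := (hmLu x).1 hx
    have hxu : x ≠ u := fun h => T.irrefl (h ▸ hadj)
    have hd := (hleaves x hxu hxv).1
    constructor
    · intro hw; exact huniq x w u hd hw hadj.symm
    · rintro rfl; exact hadj.symm
  have hAv : ∀ x ∈ Lv, ∀ w, T.Adj x w ↔ w = v := by
    intro x hx w
    obtain ⟨hadj, hxu⟩ := (hmLv x).1 hx
    have hxv : x ≠ v := fun h => T.irrefl (h ▸ hadj)
    have hd := (hleaves x hxu hxv).1
    constructor
    · intro hw; exact huniq x w v hd hw hadj.symm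
    · rintro rfl; exact hadj.symm
  have hLuLv : ∀ x, x ∈ Lu → x ∉ Lv := by
    intro x hx hx'
    have : v = u := (hAu x hx v).1 ((hmLv x).1 hx').1.symm
    exact hune this.symm
  have hpart : ∀ x : V, x = u ∨ x = v ∨ x ∈ Lu ∨ x ∈ Lv := by
    intro x
    by_cases hxu : x = u
    · exact Or.inl hxu
    by_cases hxv : x = v
    · exact Or.inr (Or.inl hxv)
    obtain ⟨hd, hadj⟩ := hleaves x hxu hxv
    rcases hadj with h | h
    · exact Or.inr (Or.inr (Or.inl ((hmLu x).2 ⟨h.symm, hxv⟩)))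
    · exact Or.inr (Or.inr (Or.inr ((hmLv x).2 ⟨h.symm, hxu⟩)))
  -- adjacency facts
  have aULu : ∀ x ∈ Lu, T.Adj u x := fun x hx => ((hmLu x).1 hx).1
  have aLuU : ∀ x ∈ Lu, T.Adj x u := fun x hx => ((hmLu x).1 hx).1.symm
  have aVLv : ∀ x ∈ Lv, T.Adj v x := fun x hx => ((hmLv x).1 hx).1
  have aLvV : ∀ x ∈ Lv, T.Adj x v := fun x hx => ((hmLv x).1 hx).1.symm
  have nULv : ∀ x ∈ Lv, ¬ T.Adj u x := fun x hx h => hune ((hAv x hx u).1 h.symm)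
  have nLvU : ∀ x ∈ Lv, ¬ T.Adj x u := fun x hx h => hune ((hAv x hx u).1 h)
  have nVLu : ∀ x ∈ Lu, ¬ T.Adj v x := fun x hx h => hune ((hAu x hx v).1 h.symm).symm
  have nLuV : ∀ x ∈ Lu, ¬ T.Adj x v := fun x hx h => hune ((hAu x hx v).1 h).symm
  have nLuLu : ∀ x ∈ Lu, ∀ y ∈ Lu, ¬ T.Adj x y := by
    intro x hx y hy h
    exact huLu (((hAu x hx y).1 h) ▸ hy)
  have nLvLv : ∀ x ∈ Lv, ∀ y ∈ Lv, ¬ T.Adj x y := by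
    intro x hx y hy h
    exact hvLv (((hAv x hx y).1 h) ▸ hy)
  have nLuLv : ∀ x ∈ Lu, ∀ y ∈ Lv, ¬ T.Adj x y := by
    intro x hx y hy h
    exact huLv (((hAu x hx y).1 h) ▸ hy)
  have nLvLu : ∀ x ∈ Lv, ∀ y ∈ Lu, ¬ T.Adj x y := by
    intro x hx y hy h
    exact hvLu (((hAv x hx y).1 h) ▸ hy)
  -- edge count on pairs
  have hec : ∀ x1 x2 y1 y2 : V, x1 ≠ x2 → y1 ≠ y2 →
      edgeCount T {x1, x2} {y1, y2} =
        ((if T.Adj x1 y1 then 1 else 0) + (if T.Adj x1 y2 then 1 else 0)) +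
        ((if T.Adj x2 y1 then 1 else 0) + (if T.Adj x2 y2 then 1 else 0)) := by
    intro x1 x2 y1 y2 h1 h2
    rw [edgeCount, Finset.sum_pair h1, Finset.sum_pair h2, Finset.sum_pair h2]
  have hdisj4 : ∀ p q r s : V, p ≠ r → p ≠ s → q ≠ r → q ≠ s →
      Disjoint ({p, q} : Finset V) {r, s} := by
    intro p q r s h1 h2 h3 h4
    rw [Finset.disjoint_left]
    intro z hz hz'
    simp only [Finset.mem_insert, Finset.mem_singleton] at hz hz'
    rcases hz with rfl | rfl <;> rcases hz' with h | h <;>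
      first | exact h1 h | exact h2 h | exact h3 h | exact h4 h
  -- cardinalities
  have hacard : a = Lu.card := by
    rw [ha, Nat.card_eq_fintype_card, Fintype.card_subtype]
  have hbcard : b = Lv.card := by
    rw [hb, Nat.card_eq_fintype_card, Fintype.card_subtype]
  obtain ⟨w0, hw0⟩ : Lv.Nonempty := Finset.card_pos.mp (by omega)
  have hw0u : w0 ≠ u := fun h => huLv (h ▸ hw0)
  have hw0v : w0 ≠ v := fun h => hvLv (h ▸ hw0)
  have hLu2 : 1 < Lu.card := by omega
  -- shape lemmas
  have S2 : ∀ x ∈ Lu, IsOddSet T {u, x} := by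
    intro x hx
    have hxu : x ≠ u := fun h => huLu (h ▸ hx)
    have hxv : x ≠ v := ((hmLu x).1 hx).2
    have hxw0 : x ≠ w0 := fun h => hLuLv x hx (h ▸ hw0)
    refine ⟨Finset.card_pair (Ne.symm hxu), {v, w0},
      Finset.card_pair (Ne.symm hw0v), hdisj4 u x v w0 hune (Ne.symm hw0u) hxv hxw0, ?_⟩
    rw [hec u x v w0 (Ne.symm hxu) (Ne.symm hw0v),
      if_pos huv, if_neg (nULv w0 hw0), if_neg (nLuV x hx), if_neg (nLuLv x hx w0 hw0)]
    decide
  have S3 : ∀ x ∈ Lv, IsOddSet T {u, x} := by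
    intro x hx
    obtain ⟨x0, hx0, -⟩ := Finset.exists_mem_ne hLu2 x
    have hxu : x ≠ u := fun h => huLv (h ▸ hx)
    have hxv : x ≠ v := fun h => hvLv (h ▸ hx)
    have hx0u : x0 ≠ u := fun h => huLu (h ▸ hx0)
    have hx0v : x0 ≠ v := ((hmLu x0).1 hx0).2
    have hxx0 : x ≠ x0 := fun h => hLuLv x0 hx0 (h ▸ hx)
    refine ⟨Finset.card_pair (Ne.symm hxu), {v, x0},
      Finset.card_pair (Ne.symm hx0v), hdisj4 u x v x0 hune (Ne.symm hx0u) hxv hxx0, ?_⟩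
    rw [hec u x v x0 (Ne.symm hxu) (Ne.symm hx0v),
      if_pos huv, if_pos (aULu x0 hx0), if_pos (aLvV x hx), if_neg (nLvLu x hx x0 hx0)]
    decide
  have S4 : ∀ x ∈ Lu, IsOddSet T {v, x} := by
    intro x hx
    have hxu : x ≠ u := fun h => huLu (h ▸ hx)
    have hxv : x ≠ v := ((hmLu x).1 hx).2
    have hxw0 : x ≠ w0 := fun h => hLuLv x hx (h ▸ hw0)
    refine ⟨Finset.card_pair (Ne.symm hxv), {u, w0},
      Finset.card_pair (Ne.symm hw0u), hdisj4 v x u w0 (Ne.symm hune) (Ne.symm hw0v) hxu hxw0, ?_⟩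
    rw [hec v x u w0 (Ne.symm hxv) (Ne.symm hw0u),
      if_pos huv.symm, if_pos (aVLv w0 hw0), if_pos (aLuU x hx), if_neg (nLuLv x hx w0 hw0)]
    decide
  have S5 : ∀ x ∈ Lv, IsOddSet T {v, x} := by
    intro x hx
    obtain ⟨x0, hx0, -⟩ := Finset.exists_mem_ne hLu2 x
    have hxu : x ≠ u := fun h => huLv (h ▸ hx)
    have hxv : x ≠ v := fun h => hvLv (h ▸ hx)
    have hx0u : x0 ≠ u := fun h => huLu (h ▸ hx0)
    have hx0v : x0 ≠ v := ((hmLu x0).1 hx0).2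
    have hxx0 : x ≠ x0 := fun h => hLuLv x0 hx0 (h ▸ hx)
    refine ⟨Finset.card_pair (Ne.symm hxv), {u, x0},
      Finset.card_pair (Ne.symm hx0u), hdisj4 v x u x0 (Ne.symm hune) (Ne.symm hx0v) hxu hxx0, ?_⟩
    rw [hec v x u x0 (Ne.symm hxv) (Ne.symm hx0u),
      if_pos huv.symm, if_neg (nVLu x0 hx0), if_neg (nLvU x hx), if_neg (nLvLu x hx x0 hx0)]
    decide
  have S7 : ∀ x ∈ Lu, ∀ y ∈ Lv, IsOddSet T {x, y} := by
    intro x hx y hy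
    obtain ⟨x0, hx0, hx0x⟩ := Finset.exists_mem_ne hLu2 x
    have hxu : x ≠ u := fun h => huLu (h ▸ hx)
    have hyu : y ≠ u := fun h => huLv (h ▸ hy)
    have hyx0 : y ≠ x0 := fun h => hLuLv x0 hx0 (h ▸ hy)
    have hxy : x ≠ y := fun h => hLuLv x hx (h ▸ hy)
    have hx0u : x0 ≠ u := fun h => huLu (h ▸ hx0)
    refine ⟨Finset.card_pair hxy, {u, x0},
      Finset.card_pair (Ne.symm hx0u), hdisj4 x y u x0 hxu (Ne.symm hx0x) hyu hyx0, ?_⟩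
    rw [hec x y u x0 hxy (Ne.symm hx0u),
      if_pos (aLuU x hx), if_neg (nLuLu x hx x0 hx0), if_neg (nLvU y hy), if_neg (nLvLu y hy x0 hx0)]
    decide
  -- bad sets are not odd
  have BadUV : ¬ IsOddSet T {u, v} := by
    rintro ⟨-, Y, hY2, hdis, hodd⟩
    obtain ⟨p, q, hpq, rfl⟩ := Finset.card_eq_two.mp hY2
    have hp : p ∉ ({u, v} : Finset V) :=
      Finset.disjoint_right.mp hdis (by simp)
    have hq : q ∉ ({u, v} : Finset V) :=
      Finset.disjoint_right.mp hdis (by simp)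
    simp only [Finset.mem_insert, Finset.mem_singleton, not_or] at hp hq
    have key : ∀ w, w ≠ u → w ≠ v →
        ((if T.Adj u w then (1:ℕ) else 0) + (if T.Adj v w then 1 else 0)) = 1 := by
      intro w hwu hwv
      rcases hpart w with rfl | rfl | h | h
      · exact absurd rfl hwu
      · exact absurd rfl hwv
      · rw [if_pos (aULu w h), if_neg (nVLu w h)]
      · rw [if_neg (nULv w h), if_pos (aVLv w h)]
    have k1 := key p hp.1 hp.2
    have k2 := key q hq.1 hq.2
    rw [hec u v p q hune hpq, Nat.odd_iff] at hodd
    generalize (if T.Adj u p then (1:ℕ) else 0) = e1 at k1 hodd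
    generalize (if T.Adj u q then (1:ℕ) else 0) = e2 at k2 hodd
    generalize (if T.Adj v p then (1:ℕ) else 0) = e3 at k1 hodd
    generalize (if T.Adj v q then (1:ℕ) else 0) = e4 at k2 hodd
    omega
  have BadL : ∀ (L : Finset V) (c : V), (∀ x ∈ L, ∀ w, T.Adj x w ↔ w = c) →
      ∀ x ∈ L, ∀ y ∈ L, x ≠ y → ¬ IsOddSet T {x, y} := by
    rintro L c hA x hx y hy hxy ⟨-, Y, hY2, hdis, hodd⟩
    obtain ⟨p, q, hpq, rfl⟩ := Finset.card_eq_two.mp hY2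
    rw [hec x y p q hxy hpq,
      if_congr (hA x hx p) rfl rfl, if_congr (hA x hx q) rfl rfl,
      if_congr (hA y hy p) rfl rfl, if_congr (hA y hy q) rfl rfl, Nat.odd_iff] at hodd
    by_cases h1 : p = c <;> by_cases h2 : q = c <;> simp [h1, h2] at hodd
  -- characterization
  set Bad : Finset (Finset V) := insert {u, v} (Lu.powersetCard 2 ∪ Lv.powersetCard 2) with hBad
  have hchar : ∀ X : Finset V, IsOddSet T X ↔ X.card = 2 ∧ X ∉ Bad := by
    intro X
    constructor
    · intro hX
      refine ⟨hX.1, fun hmem => ?_⟩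
      simp only [hBad, Finset.mem_insert, Finset.mem_union, Finset.mem_powersetCard] at hmem
      rcases hmem with rfl | ⟨hsub, hc⟩ | ⟨hsub, hc⟩
      · exact BadUV hX
      · obtain ⟨x, y, hxy, rfl⟩ := Finset.card_eq_two.mp hc
        exact BadL Lu u hAu x (hsub (by simp)) y (hsub (by simp)) hxy hX
      · obtain ⟨x, y, hxy, rfl⟩ := Finset.card_eq_two.mp hc
        exact BadL Lv v hAv x (hsub (by simp)) y (hsub (by simp)) hxy hX
    · rintro ⟨hc, hnb⟩
      obtain ⟨x, y, hxy, rfl⟩ := Finset.card_eq_two.mp hc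
      simp only [hBad, Finset.mem_insert, Finset.mem_union, Finset.mem_powersetCard,
        not_or] at hnb
      obtain ⟨hne1, hne2, hne3⟩ := hnb
      have hc2 : ({x, y} : Finset V).card = 2 := Finset.card_pair hxy
      rcases hpart x with rfl | rfl | hxLu | hxLv <;>
        rcases hpart y with rfl | rfl | hyLu | hyLv
      · exact absurd rfl hxy
      · exact absurd rfl hne1
      · exact S2 y hyLu
      · exact S3 y hyLv
      · exact absurd (Finset.pair_comm x y) hne1
      · exact absurd rfl hxy
      · exact S4 y hyLu
      · exact S5 y hyLv
      · rw [Finset.pair_comm]; exact S2 x hxLu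
      · rw [Finset.pair_comm]; exact S4 x hxLu
      · exact absurd ⟨by simp [Finset.insert_subset_iff, hxLu, hyLu], hc2⟩ hne2
      · exact S7 x hxLu y hyLv
      · rw [Finset.pair_comm]; exact S3 x hxLv
      · rw [Finset.pair_comm]; exact S5 x hxLv
      · rw [Finset.pair_comm]; exact S7 y hyLu x hxLv
      · exact absurd ⟨by simp [Finset.insert_subset_iff, hxLv, hyLv], hc2⟩ hne3
  -- counting
  have hsub2 : Bad ⊆ (univ : Finset V).powersetCard 2 := by
    intro X hX
    simp only [hBad, Finset.mem_insert, Finset.mem_union, Finset.mem_powersetCard] at hX ⊢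
    refine ⟨Finset.subset_univ X, ?_⟩
    rcases hX with rfl | h | h
    · exact Finset.card_pair hune
    · exact h.2
    · exact h.2
  have hnumodd : numOddSets T = ((univ : Finset V).powersetCard 2 \ Bad).card := by
    rw [numOddSets, Nat.card_eq_fintype_card, Fintype.card_subtype]
    congr 1
    ext X
    simp only [Finset.mem_filter, Finset.mem_univ, true_and, Finset.mem_sdiff,
      Finset.mem_powersetCard]
    rw [hchar X]
    constructor
    · rintro ⟨h1, h2⟩; exact ⟨⟨Finset.subset_univ X, h1⟩, h2⟩
    · rintro ⟨⟨-, h1⟩, h2⟩; exact ⟨h1, h2⟩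
  have hnotmem : ({u, v} : Finset V) ∉ Lu.powersetCard 2 ∪ Lv.powersetCard 2 := by
    simp only [Finset.mem_union, Finset.mem_powersetCard, not_or]
    constructor
    · rintro ⟨hsub, -⟩; exact huLu (hsub (by simp))
    · rintro ⟨hsub, -⟩; exact huLv (hsub (by simp))
  have hdisjPC : Disjoint (Lu.powersetCard 2) (Lv.powersetCard 2) := by
    rw [Finset.disjoint_left]
    intro X h1 h2
    rw [Finset.mem_powersetCard] at h1 h2
    obtain ⟨x, hxX⟩ := Finset.card_pos.mp (by rw [h1.2]; norm_num)
    exact hLuLv x (h1.1 hxX) (h2.1 hxX)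
  have hBadcard : Bad.card = 1 + a.choose 2 + b.choose 2 := by
    rw [hBad, Finset.card_insert_of_notMem hnotmem, Finset.card_union_of_disjoint hdisjPC,
      Finset.card_powersetCard, Finset.card_powersetCard, ← hacard, ← hbcard]
    omega
  have htot : numOddSets T + Bad.card = (Fintype.card V).choose 2 := by
    rw [hnumodd, Finset.card_sdiff_add_card_eq_card hsub2, Finset.card_powersetCard,
      Finset.card_univ]
  rw [hBadcard] at htot
  have h2 : ((numOddSets T + (1 + a.choose 2 + b.choose 2) : ℕ) : ℝ)
      = (((Fintype.card V).choose 2 : ℕ) : ℝ) := by exact_mod_cast congrArg Nat.cast htot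
  push_cast [Nat.cast_choose_two] at h2
  have hnreal : (Fintype.card V : ℝ) = (a : ℝ) + b + 2 := by exact_mod_cast hn
  have hba' : (b : ℝ) ≤ a := by exact_mod_cast hba
  have ha2' : (2 : ℝ) ≤ a := by exact_mod_cast ha2
  have hb1' : (1 : ℝ) ≤ b := by exact_mod_cast hb1
  constructor
  · linarith
  · nlinarith [mul_nonneg (sub_nonneg.mpr hba') (by linarith : (0:ℝ) ≤ (b:ℝ))]
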